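/- Let k > 0, let T be a finite abelian group, and let G be an abelian group. If the group Hom(ℤ^k ⊕ T, G) of additive homomorphisms is isomorphic (as an abelian group) to ℤ^k, then G ≅ ℤ. -/

import Mathlib

/-- If `k > 0`, `T` is a finite abelian group, `G` an abelian group, and the
group of additive homomorphisms `Hom(ℤ^k ⊕ T, G)` is isomorphic to `ℤ^k`, then `G ≅ ℤ`. -/
theorem hom_zpow_oplus_torsion_eq_zpow_implies_int (k : ℕ) (hk : 0 < k)
    (T : Type) [AddCommGroup T] [Finite T] (G : Type) [AddCommGroup G]
    (h : Nonempty ((((Fin k → ℤ) × T) →+ G) ≃+ (Fin k → ℤ))) :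
    Nonempty (G ≃+ ℤ) := by
  obtain ⟨e⟩ := h
  set i0 : Fin k := ⟨0, hk⟩
  -- an injection G → Hom(ℤ^k × T, G)
  let φ : G →+ (((Fin k → ℤ) × T) →+ G) :=
    { toFun := fun g =>
        { toFun := fun p => p.1 i0 • g
          map_zero' := by simp
          map_add' := fun p q => by simp [add_smul] }
      map_zero' := by ext p; simp
      map_add' := fun g g' => by ext p; simp [smul_add] }
  have hφ : Function.Injective φ := by
    intro g g' hgg'
    have := congrArg (fun f => f ((fun _ => (1:ℤ)), 0)) hgg'
    simpa [φ] using this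
  let j : G →ₗ[ℤ] (Fin k → ℤ) := (e.toAddMonoidHom.comp φ).toIntLinearMap
  have hj : Function.Injective j := e.injective.comp hφ
  have hnz : NoZeroSMulDivisors ℤ G := by
    constructor
    intro n g hng
    have : j (n • g) = 0 := by rw [hng]; simp
    rw [map_smul] at this
    rcases smul_eq_zero.mp this with h1 | h2
    · exact Or.inl h1
    · exact Or.inr (hj (by simpa using h2))
  have hnoeth : IsNoetherian ℤ G := isNoetherian_of_injective j hj
  have hfin : Module.Finite ℤ G := Module.Finite.of_injective j hj
  have hfree : Module.Free ℤ G := Module.free_of_finite_type_torsion_free'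
  -- Hom(T, G) is trivial
  have hsub : Subsingleton (T →ₗ[ℤ] G) := by
    constructor
    intro f g
    ext t
    have ht : IsOfFinAddOrder t := isOfFinAddOrder_of_finite t
    have hn : (addOrderOf t : ℤ) ≠ 0 := by
      exact_mod_cast (addOrderOf_pos t).ne'
    have hcancel : ∀ (f : T →ₗ[ℤ] G), f t = 0 := by
      intro f
      have : (addOrderOf t : ℤ) • f t = 0 := by
        rw [← map_smul]
        simp [addOrderOf_nsmul_eq_zero t]
      rcases smul_eq_zero.mp this with h1 | h2
      · exact absurd h1 hn
      · exact h2
    rw [hcancel f, hcancel g]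
  -- assemble the linear equivalence (Fin k → G) ≃ₗ (Fin k → ℤ)
  let E1 : (Fin k → G) ≃ₗ[ℤ] ((Fin k → ℤ) →ₗ[ℤ] G) := (Pi.basisFun ℤ (Fin k)).constr ℤ
  let E2 : ((Fin k → ℤ) →ₗ[ℤ] G) ≃ₗ[ℤ] (((Fin k → ℤ) →ₗ[ℤ] G) × (T →ₗ[ℤ] G)) :=
    { toFun := fun f => (f, 0)
      invFun := Prod.fst
      map_add' := fun f g => by ext <;> simp
      map_smul' := fun n f => by ext <;> simp
      left_inv := fun f => rfl
      right_inv := fun p => by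
        ext1
        · rfl
        · exact Subsingleton.elim _ _ }
  let E3 : (((Fin k → ℤ) →ₗ[ℤ] G) × (T →ₗ[ℤ] G)) ≃ₗ[ℤ] (((Fin k → ℤ) × T) →ₗ[ℤ] G) :=
    LinearMap.coprodEquiv ℤ
  let E4 : (((Fin k → ℤ) × T) →ₗ[ℤ] G) ≃ₗ[ℤ] (((Fin k → ℤ) × T) →+ G) :=
    (addMonoidHomLequivInt ℤ).symm
  let E5 : (((Fin k → ℤ) × T) →+ G) ≃ₗ[ℤ] (Fin k → ℤ) := e.toIntLinearEquiv
  let F : (Fin k → G) ≃ₗ[ℤ] (Fin k → ℤ) :=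
    E1 ≪≫ₗ E2 ≪≫ₗ E3 ≪≫ₗ E4 ≪≫ₗ E5
  have hrank : Module.finrank ℤ (Fin k → G) = Module.finrank ℤ (Fin k → ℤ) := F.finrank_eq
  rw [Module.finrank_pi_fintype, Module.finrank_pi] at hrank
  simp only [Finset.sum_const, Finset.card_univ, Fintype.card_fin, smul_eq_mul] at hrank
  have h1 : Module.finrank ℤ G = 1 := by
    have hk' : k ≠ 0 := hk.ne'
    nlinarith [hrank]
  have b : Module.Basis (Fin 1) ℤ G := Module.finBasisOfFinrankEq ℤ G h1
  exact ⟨(b.equivFun ≪≫ₗ LinearEquiv.funUnique (Fin 1) ℤ ℤ).toAddEquiv⟩
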